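/- Let K be a field, let E₁ and E₂ be directed graphs with free path groupoids G₁ = G(E₁) and G₂ = G(E₂), and suppose there exists a groupoid homomorphism h : Arr(G₁) → Arr(G₂) whose restriction to W₁ := W(E₁) is injective and which satisfies h(W₁) = W₂ := W(E₂). Then there exists a K-algebra isomorphism φ : L_K(E₁) → L_K(E₂) preserving the generators, in the following sense: for every vertex v of E₁, φ(v) = h(v), where h(v) is the vertex of E₂ with h(𝟙_v) = 𝟙_{h(v)}; and for every edge e of E₁, φ(e) = f and φ(e*) = f*, where f is an edge of E₂ with ⟦f⟧ = h(⟦e⟧). -/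

import Mathlib

open CategoryTheory

universe u v u' v'

/-- The set of arrows of a groupoid. -/
abbrev Arr (C : Type u) [Groupoid.{v} C] : Type (max u v) := Σ (x y : C), x ⟶ y

/-- Two arrows `g₁ : x ⟶ y` and `g₂ : z ⟶ w` are composable if `y = z`. -/
def Arr.Composable {C : Type u} [Groupoid.{v} C] (g₁ g₂ : Arr C) : Prop := g₁.2.1 = g₂.1

/-- Composition of composable arrows. -/
def Arr.comp {C : Type u} [Groupoid.{v} C] (g₁ g₂ : Arr C) (h : g₁.Composable g₂) : Arr C :=
  ⟨g₁.1, g₂.2.1, g₁.2.2 ≫ eqToHom h ≫ g₂.2.2⟩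

/-- The identity arrow at an object. -/
def idArr {C : Type u} [Groupoid.{v} C] (x : C) : Arr C := ⟨x, x, 𝟙 x⟩

/-- Inverse of an arrow. -/
def Arr.inv {C : Type u} [Groupoid.{v} C] (g : Arr C) : Arr C :=
  ⟨g.2.1, g.1, Groupoid.inv g.2.2⟩

/-- A groupoid homomorphism, as a map on arrows preserving composability and composition. -/
def IsGroupoidHom {C : Type u} {D : Type u'} [Groupoid.{v} C] [Groupoid.{v'} D]
    (h : Arr C → Arr D) : Prop :=
  ∀ g₁ g₂ : Arr C, ∀ hc : g₁.Composable g₂,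
    ∃ hc' : (h g₁).Composable (h g₂), h (g₁.comp g₂ hc) = (h g₁).comp (h g₂) hc'

/-- The arrow of the free groupoid associated to a path in the quiver `V`;
this is the image of `p` under the canonical functor `Paths V ⥤ FreeGroupoid V`
extending the inclusion of `V`. -/
def pathArrow (V : Type u) [Quiver.{v} V] {x y : V} (p : Quiver.Path x y) :
    Arr (Quiver.FreeGroupoid V) :=
  ⟨(Quiver.FreeGroupoid.of V).obj x, (Quiver.FreeGroupoid.of V).obj y,
    composePath ((Quiver.FreeGroupoid.of V).mapPath p)⟩

/-- The set `W(E)` of arrows of `FreeGroupoid V` that are images of finite paths of `V`. -/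
def WSet (V : Type u) [Quiver.{v} V] : Set (Arr (Quiver.FreeGroupoid V)) :=
  {a | ∃ (x y : V) (p : Quiver.Path x y), a = pathArrow V p}

/-- A directed graph `E = (E⁰, E¹, s, r)`. -/
structure DirGraph : Type 1 where
  V : Type
  Edge : Type
  src : Edge → V
  rng : Edge → V

/-- The quiver structure on the vertices of a directed graph: an arrow `x ⟶ y` is an edge
with source `x` and range `y`. -/
instance DirGraph.quiver (G : DirGraph) : Quiver.{0} G.V :=
  ⟨fun x y => {e : G.Edge // G.src e = x ∧ G.rng e = y}⟩

/-- The arrow of the free path groupoid of `G` determined by an edge `e` of `G`. -/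
def DirGraph.edgeArrow (G : DirGraph) (e : G.Edge) : Arr (Quiver.FreeGroupoid G.V) :=
  pathArrow G.V (Quiver.Hom.toPath (show G.src e ⟶ G.rng e from ⟨e, rfl, rfl⟩))

variable (K : Type) [Field K]

/-- The generating relations of the Leavitt path algebra of the graph `G`, inside the free
`K`-algebra on the generators `E⁰ ⊕ E¹ ⊕ (E¹)*`. -/
inductive LeavittRel (G : DirGraph) :
    FreeAlgebra K (G.V ⊕ G.Edge ⊕ G.Edge) → FreeAlgebra K (G.V ⊕ G.Edge ⊕ G.Edge) → Prop
  | vertex_idem (v : G.V) :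
      LeavittRel G (FreeAlgebra.ι K (Sum.inl v) * FreeAlgebra.ι K (Sum.inl v))
        (FreeAlgebra.ι K (Sum.inl v))
  | vertex_orth (v w : G.V) (hvw : v ≠ w) :
      LeavittRel G (FreeAlgebra.ι K (Sum.inl v) * FreeAlgebra.ι K (Sum.inl w)) 0
  | src_edge (e : G.Edge) :
      LeavittRel G (FreeAlgebra.ι K (Sum.inl (G.src e)) * FreeAlgebra.ι K (Sum.inr (Sum.inl e)))
        (FreeAlgebra.ι K (Sum.inr (Sum.inl e)))
  | edge_rng (e : G.Edge) :
      LeavittRel G (FreeAlgebra.ι K (Sum.inr (Sum.inl e)) * FreeAlgebra.ι K (Sum.inl (G.rng e)))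
        (FreeAlgebra.ι K (Sum.inr (Sum.inl e)))
  | rng_star (e : G.Edge) :
      LeavittRel G (FreeAlgebra.ι K (Sum.inl (G.rng e)) * FreeAlgebra.ι K (Sum.inr (Sum.inr e)))
        (FreeAlgebra.ι K (Sum.inr (Sum.inr e)))
  | star_src (e : G.Edge) :
      LeavittRel G (FreeAlgebra.ι K (Sum.inr (Sum.inr e)) * FreeAlgebra.ι K (Sum.inl (G.src e)))
        (FreeAlgebra.ι K (Sum.inr (Sum.inr e)))
  | star_edge_same (e : G.Edge) :
      LeavittRel G (FreeAlgebra.ι K (Sum.inr (Sum.inr e)) * FreeAlgebra.ι K (Sum.inr (Sum.inl e)))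
        (FreeAlgebra.ι K (Sum.inl (G.rng e)))
  | star_edge_orth (e f : G.Edge) (hef : e ≠ f) :
      LeavittRel G (FreeAlgebra.ι K (Sum.inr (Sum.inr e)) * FreeAlgebra.ι K (Sum.inr (Sum.inl f)))
        0
  | cuntz_krieger (v : G.V) (hfin : {e : G.Edge | G.src e = v}.Finite)
      (hne : {e : G.Edge | G.src e = v}.Nonempty) :
      LeavittRel G (FreeAlgebra.ι K (Sum.inl v))
        (∑ e ∈ hfin.toFinset,
          FreeAlgebra.ι K (Sum.inr (Sum.inl e)) * FreeAlgebra.ι K (Sum.inr (Sum.inr e)))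

/-- The Leavitt path algebra `L_K(G)` of a directed graph `G` over the field `K`. -/
abbrev LeavittPathAlgebra (G : DirGraph) := RingQuot (LeavittRel K G)

/-- The generator of `L_K(G)` corresponding to a vertex `v ∈ E⁰`. -/
def vertexGen (G : DirGraph) (v : G.V) : LeavittPathAlgebra K G :=
  RingQuot.mkAlgHom K (LeavittRel K G) (FreeAlgebra.ι K (Sum.inl v))

/-- The generator of `L_K(G)` corresponding to an edge `e ∈ E¹`. -/
def edgeGen (G : DirGraph) (e : G.Edge) : LeavittPathAlgebra K G :=
  RingQuot.mkAlgHom K (LeavittRel K G) (FreeAlgebra.ι K (Sum.inr (Sum.inl e)))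

/-- The generator of `L_K(G)` corresponding to a ghost edge `e* ∈ (E¹)*`. -/
def starGen (G : DirGraph) (e : G.Edge) : LeavittPathAlgebra K G :=
  RingQuot.mkAlgHom K (LeavittRel K G) (FreeAlgebra.ι K (Sum.inr (Sum.inr e)))


namespace LeavittAux

open CategoryTheory

universe w₁ w₂

variable {V : Type u} [Quiver.{v} V]

/-- The letters (edges with endpoints) of a quiver. -/
abbrev Letter (V : Type u) [Quiver.{v} V] : Type (max u v) := Σ a b : V, a ⟶ b

/-- The underlying vertex of an object of the free groupoid. -/
def asV (z : Quiver.FreeGroupoid V) : V :=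
  ((show CategoryTheory.Quotient (@Quiver.FreeGroupoid.redStep V _) from z).as : Paths (Quiver.Symmetrify V))

lemma asV_of (x : V) : asV ((Quiver.FreeGroupoid.of V).obj x) = x := rfl

lemma of_obj_inj {x y : V}
    (h : (Quiver.FreeGroupoid.of V).obj x = (Quiver.FreeGroupoid.of V).obj y) : x = y :=
  congrArg asV h

lemma obj_as (z : Quiver.FreeGroupoid V) : (Quiver.FreeGroupoid.of V).obj (asV z) = z := rfl

/-- The word (list of letters, in reverse order, with positive orientation) of a path. -/
def edgeWord : ∀ {x y : V}, Quiver.Path x y → List (Letter V × Bool)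
  | _, _, Quiver.Path.nil => []
  | _, _, Quiver.Path.cons p f => (⟨_, _, f⟩, true) :: edgeWord p

@[simp] lemma edgeWord_nil {x : V} : edgeWord (Quiver.Path.nil : Quiver.Path x x) = [] := by
  unfold edgeWord
  rfl

@[simp] lemma edgeWord_cons {x y z : V} (p : Quiver.Path x y) (f : y ⟶ z) :
    edgeWord (p.cons f) = (⟨y, z, f⟩, true) :: edgeWord p := by
  simp [edgeWord]

lemma edgeWord_true : ∀ {x y : V} (p : Quiver.Path x y), ∀ l ∈ edgeWord p, l.2 = true
  | _, _, Quiver.Path.nil => by intro l hl; simp at hl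
  | _, _, Quiver.Path.cons p f => by
      intro l hl
      rw [edgeWord_cons] at hl
      rcases List.mem_cons.mp hl with h | h
      · rw [h]
      · exact edgeWord_true p l h

lemma edgeWord_comp {x y z : V} (p : Quiver.Path x y) (q : Quiver.Path y z) :
    edgeWord (p.comp q) = edgeWord q ++ edgeWord p := by
  induction q with
  | nil => rw [Quiver.Path.comp_nil, edgeWord_nil, List.nil_append]
  | cons q f ih => rw [Quiver.Path.comp_cons, edgeWord_cons, edgeWord_cons, ih]; rfl

lemma edgeWord_toPath {x y : V} (f : x ⟶ y) :
    edgeWord f.toPath = [(⟨x, y, f⟩, true)] := by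
  unfold Quiver.Hom.toPath
  rw [edgeWord_cons, edgeWord_nil]

lemma reduce_eq_self {α : Type w₁} [DecidableEq α] (w : List (α × Bool))
    (hw : ∀ l ∈ w, l.2 = true) : FreeGroup.reduce w = w := by
  induction w with
  | nil => rfl
  | cons x l ih =>
    rw [FreeGroup.reduce.cons, ih (fun l hl => hw l (List.mem_cons_of_mem _ hl))]
    cases l with
    | nil => rfl
    | cons y t =>
      show (if x.1 = y.1 ∧ x.2 = !y.2 then t else x :: y :: t) = x :: y :: t
      rw [if_neg]
      rintro ⟨-, h2⟩
      rw [hw x (List.mem_cons_self), hw y (List.mem_cons_of_mem _ (List.mem_cons_self))]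
        at h2
      simp at h2

lemma edgeWord_inj : ∀ {x y : V} (p q : Quiver.Path x y), edgeWord p = edgeWord q → p = q := by
  intro x y p
  induction p with
  | nil =>
    intro q hq
    cases q with
    | nil => rfl
    | cons q' g => rw [edgeWord_nil, edgeWord_cons] at hq; exact absurd hq (by simp)
  | cons p' f ih =>
    intro q hq
    cases q with
    | nil => rw [edgeWord_nil, edgeWord_cons] at hq; exact absurd hq (by simp)
    | cons q' g =>
      rw [edgeWord_cons, edgeWord_cons] at hq
      obtain ⟨h1, h2⟩ := List.cons.inj hq
      have hb := congrArg (fun l => l.1.1) h1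
      simp only at hb
      subst hb
      have hf : f = g := by simpa using h1
      subst hf
      rw [ih q' h2]

/-- The prefunctor from `V` to the single-object groupoid on the free group on letters. -/
def toGroupPre : V ⥤q CategoryTheory.SingleObj (FreeGroup (Letter V)) where
  obj _ := CategoryTheory.SingleObj.star _
  map {a b} f := FreeGroup.of ⟨a, b, f⟩

/-- The induced functor on the free groupoid. -/
def toGroup : Quiver.FreeGroupoid V ⥤ CategoryTheory.SingleObj (FreeGroup (Letter V)) :=
  Quiver.FreeGroupoid.lift toGroupPre

lemma toGroup_map_of {x y : V} (f : x ⟶ y) :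
    toGroup.map ((Quiver.FreeGroupoid.of V).map f) = FreeGroup.of (⟨x, y, f⟩ : Letter V) := rfl

lemma toGroup_map_path {x y : V} (p : Quiver.Path x y) :
    toGroup.map (composePath ((Quiver.FreeGroupoid.of V).mapPath p)) = FreeGroup.mk (edgeWord p) := by
  induction p with
  | nil =>
    show toGroup.map (𝟙 _) = _
    rw [toGroup.map_id, edgeWord_nil]
    rfl
  | cons p f ih =>
    show toGroup.map (composePath ((Quiver.FreeGroupoid.of V).mapPath p) ≫
      (Quiver.FreeGroupoid.of V).map f) = _
    rw [toGroup.map_comp, CategoryTheory.SingleObj.comp_as_mul, ih, toGroup_map_of,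
      edgeWord_cons]
    show FreeGroup.mk [(⟨_, _, f⟩, true)] * FreeGroup.mk (edgeWord p) = _
    rw [FreeGroup.mul_mk]
    rfl

end LeavittAux
namespace LeavittAux
open CategoryTheory
universe w₁ w₂
variable {V : Type u} [Quiver.{v} V]


lemma arrMk_inj {C : Type w₁} [CategoryTheory.Groupoid.{w₂} C] {x y : C} {f g : x ⟶ y}
    (h : (⟨x, y, f⟩ : Arr C) = ⟨x, y, g⟩) : f = g := by
  simpa using h

lemma pathArrow_fst {x y : V} (p : Quiver.Path x y) :
    (pathArrow V p).1 = (Quiver.FreeGroupoid.of V).obj x := rfl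

lemma pathArrow_eq_iff {x y x' y' : V} {p : Quiver.Path x y} {q : Quiver.Path x' y'}
    (h : pathArrow V p = pathArrow V q) : x = x' ∧ y = y' ∧ edgeWord p = edgeWord q := by
  have hx : x = x' := of_obj_inj (congrArg (fun a => a.1) h)
  subst hx
  have hy : y = y' := of_obj_inj (congrArg (fun a => a.2.1) h)
  subst hy
  refine ⟨rfl, rfl, ?_⟩
  have harr : composePath ((Quiver.FreeGroupoid.of V).mapPath p) =
      composePath ((Quiver.FreeGroupoid.of V).mapPath q) := arrMk_inj h
  have := congrArg toGroup.map harr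
  rw [toGroup_map_path, toGroup_map_path] at this
  classical
  have hred := FreeGroup.reduce.sound (α := Letter V) this
  rwa [reduce_eq_self _ (edgeWord_true p), reduce_eq_self _ (edgeWord_true q)] at hred

lemma pathArrow_inj {x y : V} {p q : Quiver.Path x y} (h : pathArrow V p = pathArrow V q) :
    p = q :=
  edgeWord_inj p q (pathArrow_eq_iff h).2.2

lemma idArr_eq_pathArrow (z : Quiver.FreeGroupoid V) :
    idArr z = pathArrow V (Quiver.Path.nil : Quiver.Path (asV z) (asV z)) := rfl

lemma idArr_mem_WSet (z : Quiver.FreeGroupoid V) : idArr z ∈ WSet V :=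
  ⟨asV z, asV z, Quiver.Path.nil, idArr_eq_pathArrow z⟩

lemma pathArrow_mem_WSet {x y : V} (p : Quiver.Path x y) : pathArrow V p ∈ WSet V :=
  ⟨x, y, p, rfl⟩

lemma pathArrow_comp' {x y z : V} (p : Quiver.Path x y) (q : Quiver.Path y z)
    (hc : (pathArrow V p).Composable (pathArrow V q)) :
    (pathArrow V p).comp (pathArrow V q) hc = pathArrow V (p.comp q) := by
  unfold Arr.comp pathArrow
  dsimp only
  erw [CategoryTheory.eqToHom_refl, CategoryTheory.Category.id_comp]
  congr 1
  apply congrArg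
  rw [Prefunctor.mapPath_comp, CategoryTheory.composePath_comp]

lemma comp_idArr {C : Type w₁} [CategoryTheory.Groupoid.{w₂} C] (a : Arr C) :
    a.comp (idArr a.2.1) rfl = a := by
  obtain ⟨x, y, f⟩ := a
  simp [Arr.comp, idArr]

lemma idArr_comp {C : Type w₁} [CategoryTheory.Groupoid.{w₂} C] (a : Arr C) :
    (idArr a.1).comp a rfl = a := by
  obtain ⟨x, y, f⟩ := a
  simp [Arr.comp, idArr]


end LeavittAux
namespace LeavittAux
open CategoryTheory
universe w₁ w₂

lemma idArr_comp_idArr {C : Type w₁} [Groupoid.{w₂} C] (z : C) :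
    (idArr z).comp (idArr z) rfl = idArr z := by
  simp [Arr.comp, idArr]

section Hom

variable {V₁ : Type u} [Quiver.{v} V₁] {V₂ : Type u'} [Quiver.{v'} V₂]
variable (h : Arr (Quiver.FreeGroupoid V₁) → Arr (Quiver.FreeGroupoid V₂))

lemma h_id (hhom : IsGroupoidHom h) (z : Quiver.FreeGroupoid V₁) :
    h (idArr z) = idArr ((h (idArr z)).1) := by
  obtain ⟨hc', heq⟩ := hhom (idArr z) (idArr z) rfl
  rw [idArr_comp_idArr z] at heq
  generalize h (idArr z) = g at hc' heq ⊢
  obtain ⟨a, b, γ⟩ := g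
  have hba : b = a := hc'
  subst hba
  have h3 : γ = γ ≫ eqToHom hc' ≫ γ := arrMk_inj heq
  erw [eqToHom_refl, Category.id_comp] at h3
  have hγ : γ = 𝟙 b := by
    have h4 := congrArg (fun δ => Groupoid.inv γ ≫ δ) h3
    simp only [← Category.assoc, Groupoid.inv_comp, Category.id_comp] at h4
    exact h4.symm
  rw [hγ]
  rfl

lemma h_target (hhom : IsGroupoidHom h) (a : Arr (Quiver.FreeGroupoid V₁)) :
    h (idArr a.2.1) = idArr ((h a).2.1) := by
  obtain ⟨hc', -⟩ := hhom a (idArr a.2.1) rfl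
  rw [h_id h hhom a.2.1]
  rw [h_id h hhom a.2.1] at hc'
  exact congrArg idArr hc'.symm

lemma h_source (hhom : IsGroupoidHom h) (a : Arr (Quiver.FreeGroupoid V₁)) :
    h (idArr a.1) = idArr ((h a).1) := by
  obtain ⟨hc', -⟩ := hhom (idArr a.1) a rfl
  rw [h_id h hhom a.1]
  rw [h_id h hhom a.1] at hc'
  exact congrArg idArr hc'

lemma idArr_injective {C : Type w₁} [Groupoid.{w₂} C] {x y : C} (h : idArr x = idArr y) :
    x = y := congrArg (fun a => a.1) h

lemma h_refl_composable (hhom : IsGroupoidHom h) (hinj : Set.InjOn h (WSet V₁))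
    (a b : Arr (Quiver.FreeGroupoid V₁)) (hc : (h a).Composable (h b)) : a.Composable b := by
  have h1 : h (idArr a.2.1) = h (idArr b.1) := by
    rw [h_target h hhom a, h_source h hhom b]
    exact congrArg idArr hc
  have h2 := hinj (idArr_mem_WSet _) (idArr_mem_WSet _) h1
  exact idArr_injective h2

lemma h_pre_id (hhom : IsGroupoidHom h) (hinj : Set.InjOn h (WSet V₁))
    {a : Arr (Quiver.FreeGroupoid V₁)} (ha : a ∈ WSet V₁) {t : Quiver.FreeGroupoid V₂}
    (hat : h a = idArr t) : a = idArr a.2.1 := by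
  have h1 : h (idArr a.2.1) = h a := by
    rw [h_target h hhom a, hat]
    rfl
  exact (hinj (idArr_mem_WSet _) ha h1).symm

end Hom
end LeavittAux
namespace LeavittAux
open CategoryTheory
universe w₁ w₂

section Keys

variable {V₁ : Type u} [Quiver.{v} V₁] {V₂ : Type u'} [Quiver.{v'} V₂]
variable (h : Arr (Quiver.FreeGroupoid V₁) → Arr (Quiver.FreeGroupoid V₂))

lemma pathArrow_comp'' {V : Type w₁} [Quiver.{w₂} V] {x y x' y' : V}
    (p : Quiver.Path x y) (q : Quiver.Path x' y')
    (hc : (pathArrow V p).Composable (pathArrow V q)) :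
    ∃ (z : V) (p' : Quiver.Path x z) (q' : Quiver.Path z y'),
      edgeWord p' = edgeWord p ∧ edgeWord q' = edgeWord q ∧
      (pathArrow V p).comp (pathArrow V q) hc = pathArrow V (p'.comp q') := by
  have hyx : y = x' := of_obj_inj hc
  subst hyx
  exact ⟨y, p, q, rfl, rfl, pathArrow_comp' p q hc⟩

lemma pathArrow_ne_id {V : Type w₁} [Quiver.{w₂} V] {x y z' : V}
    (p : Quiver.Path x y) (f : y ⟶ z') (t : Quiver.FreeGroupoid V) :
    pathArrow V (p.cons f) ≠ idArr t := by
  intro hEq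
  rw [idArr_eq_pathArrow] at hEq
  have := (pathArrow_eq_iff hEq).2.2
  rw [edgeWord_cons, edgeWord_nil] at this
  exact absurd this (by simp)

lemma no_single_letter_decomp {V : Type w₁} [Quiver.{w₂} V] {x y : V} (f : x ⟶ y)
    {x1 y1 x2 y2 : V} (p : Quiver.Path x1 y1) (q : Quiver.Path x2 y2)
    (hp : edgeWord p ≠ []) (hq : edgeWord q ≠ [])
    (hc : (pathArrow V p).Composable (pathArrow V q))
    (heq : pathArrow V f.toPath = (pathArrow V p).comp (pathArrow V q) hc) : False := by
  obtain ⟨z, p', q', hw1, hw2, hcv⟩ := pathArrow_comp'' p q hc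
  rw [hcv] at heq
  have hw := (pathArrow_eq_iff heq).2.2
  rw [edgeWord_toPath, edgeWord_comp, hw1, hw2] at hw
  have hlen := congrArg List.length hw
  rw [List.length_append] at hlen
  have h1 : 1 ≤ (edgeWord q).length := Nat.one_le_iff_ne_zero.mpr
    (fun hz => hq (List.length_eq_zero_iff.mp hz))
  have h2 : 1 ≤ (edgeWord p).length := Nat.one_le_iff_ne_zero.mpr
    (fun hz => hp (List.length_eq_zero_iff.mp hz))
  simp only [List.length_singleton] at hlen
  omega

lemma word_ne_nil_forward (hhom : IsGroupoidHom h) {xu yu : V₁} (pu : Quiver.Path xu yu)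
    {x2 y2 z2 : V₂} (q : Quiver.Path x2 y2) (g : y2 ⟶ z2)
    (hu : h (pathArrow V₁ pu) = pathArrow V₂ (q.cons g)) : edgeWord pu ≠ [] := by
  cases pu with
  | nil =>
    exfalso
    have hid := h_id h hhom ((Quiver.FreeGroupoid.of V₁).obj xu)
    exact pathArrow_ne_id q g _ (hu.symm.trans hid)
  | cons p' f' => simp

lemma word_ne_nil_backward (hhom : IsGroupoidHom h) (hinj : Set.InjOn h (WSet V₁))
    {x y z : V₁} (p : Quiver.Path x y) (f : y ⟶ z) {x2 y2 : V₂} (qu : Quiver.Path x2 y2)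
    (hu : h (pathArrow V₁ (p.cons f)) = pathArrow V₂ qu) : edgeWord qu ≠ [] := by
  cases qu with
  | nil =>
    exfalso
    have : pathArrow V₁ (p.cons f) = idArr (pathArrow V₁ (p.cons f)).2.1 :=
      h_pre_id h hhom hinj (pathArrow_mem_WSet _) hu
    exact pathArrow_ne_id p f _ this
  | cons q' g' => simp

variable (hhom : IsGroupoidHom h) (hinj : Set.InjOn h (WSet V₁))
  (himg : h '' WSet V₁ = WSet V₂)

include hhom hinj himg in
lemma h_edge {x y : V₁} (f : x ⟶ y) :
    ∃ (x' y' : V₂) (g : x' ⟶ y'), h (pathArrow V₁ f.toPath) = pathArrow V₂ g.toPath := by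
  have hW2 : h (pathArrow V₁ f.toPath) ∈ WSet V₂ := by
    rw [← himg]; exact Set.mem_image_of_mem h (pathArrow_mem_WSet _)
  obtain ⟨x₂, y₂, q, hq⟩ := hW2
  cases q with
  | nil =>
    exfalso
    have hid : h (pathArrow V₁ f.toPath) = idArr ((Quiver.FreeGroupoid.of V₂).obj x₂) := hq
    have := h_pre_id h hhom hinj (pathArrow_mem_WSet _) hid
    exact pathArrow_ne_id Quiver.Path.nil f _ this
  | cons q' g =>
    cases q' with
    | nil => exact ⟨_, _, g, hq⟩
    | cons q'' g' =>
      exfalso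
      -- split the target path
      have hu' : pathArrow V₂ (q''.cons g') ∈ h '' WSet V₁ := by
        rw [himg]; exact pathArrow_mem_WSet _
      have hv' : pathArrow V₂ g.toPath ∈ h '' WSet V₁ := by
        rw [himg]; exact pathArrow_mem_WSet _
      obtain ⟨u, huW, hu⟩ := hu'
      obtain ⟨v, hvW, hv⟩ := hv'
      have hcomp' : (h u).Composable (h v) := by rw [hu, hv]; rfl
      have hc : u.Composable v := h_refl_composable h hhom hinj u v hcomp'
      obtain ⟨hc', heq⟩ := hhom u v hc
      have h5 : (h u).comp (h v) hc' = pathArrow V₂ ((q''.cons g').cons g) := by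
        simp only [hu, hv]
        rw [pathArrow_comp']
        rfl
      obtain ⟨xu, yu, pu, rfl⟩ := huW
      obtain ⟨xv, yv, pv, rfl⟩ := hvW
      obtain ⟨zz, pu', pv', hw1, hw2, hcv⟩ := pathArrow_comp'' pu pv hc
      rw [hcv, h5, ← hq] at heq
      have hfin : pathArrow V₁ f.toPath = pathArrow V₁ (pu'.comp pv') :=
        hinj (pathArrow_mem_WSet _) (pathArrow_mem_WSet _) heq.symm
      have hwp : edgeWord (pu'.comp pv') = edgeWord pv' ++ edgeWord pu' := edgeWord_comp _ _
      have hw := (pathArrow_eq_iff hfin).2.2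
      rw [edgeWord_toPath, hwp, hw1, hw2] at hw
      have hpu : edgeWord pu ≠ [] := word_ne_nil_forward h hhom pu q'' g' hu
      have hpv : edgeWord pv ≠ [] := by
        have := word_ne_nil_forward h hhom pv Quiver.Path.nil g hv
        exact this
      have hlen := congrArg List.length hw
      rw [List.length_append] at hlen
      have h1 : 1 ≤ (edgeWord pv).length := Nat.one_le_iff_ne_zero.mpr
        (fun hz => hpv (List.length_eq_zero_iff.mp hz))
      have h2 : 1 ≤ (edgeWord pu).length := Nat.one_le_iff_ne_zero.mpr
        (fun hz => hpu (List.length_eq_zero_iff.mp hz))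
      simp only [List.length_singleton] at hlen
      omega

include hhom hinj himg in
lemma h_edge_rev {x y : V₁} (p : Quiver.Path x y) {x₂ y₂ : V₂} (g : x₂ ⟶ y₂)
    (hag : h (pathArrow V₁ p) = pathArrow V₂ g.toPath) :
    ∃ (x' y' : V₁) (f : x' ⟶ y'), pathArrow V₁ p = pathArrow V₁ f.toPath := by
  cases p with
  | nil =>
    exfalso
    have hid := h_id h hhom ((Quiver.FreeGroupoid.of V₁).obj x)
    exact pathArrow_ne_id Quiver.Path.nil g _ (hag.symm.trans hid)
  | cons p' f =>
    cases p' with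
    | nil => exact ⟨_, _, f, rfl⟩
    | cons p'' f' =>
      exfalso
      have hcu : (pathArrow V₁ (p''.cons f')).Composable (pathArrow V₁ f.toPath) := rfl
      obtain ⟨hc', heq⟩ := hhom (pathArrow V₁ (p''.cons f')) (pathArrow V₁ f.toPath) hcu
      rw [pathArrow_comp' (p''.cons f') f.toPath hcu] at heq
      have heq' : pathArrow V₂ g.toPath = (h (pathArrow V₁ (p''.cons f'))).comp
          (h (pathArrow V₁ f.toPath)) hc' := hag.symm.trans heq
      have hquW : h (pathArrow V₁ (p''.cons f')) ∈ WSet V₂ := by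
        rw [← himg]; exact Set.mem_image_of_mem h (pathArrow_mem_WSet _)
      have hqvW : h (pathArrow V₁ f.toPath) ∈ WSet V₂ := by
        rw [← himg]; exact Set.mem_image_of_mem h (pathArrow_mem_WSet _)
      obtain ⟨ax, ay, qu, hqu⟩ := hquW
      obtain ⟨bx, by', qv, hqv⟩ := hqvW
      have hpu : edgeWord qu ≠ [] := word_ne_nil_backward h hhom hinj p'' f' qu hqu
      have hpv : edgeWord qv ≠ [] := by
        cases qv with
        | nil =>
          exfalso
          have : pathArrow V₁ f.toPath = idArr (pathArrow V₁ f.toPath).2.1 :=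
            h_pre_id h hhom hinj (pathArrow_mem_WSet _) hqv
          exact pathArrow_ne_id Quiver.Path.nil f _ this
        | cons qv' gv => simp
      simp only [hqu, hqv] at heq'
      exact no_single_letter_decomp g qu qv hpu hpv _ heq'

end Keys
end LeavittAux
namespace LeavittAux
open CategoryTheory
universe w₁ w₂

lemma pathArrow_toPath_eq_edgeArrow (G : DirGraph) {x y : G.V} (g : x ⟶ y) :
    pathArrow G.V g.toPath = G.edgeArrow g.1 := by
  obtain ⟨g₀, h1, h2⟩ := g
  subst h1
  subst h2
  rfl

/-- Extract the underlying edge from a letter of the quiver of a directed graph. -/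
def letterEdge (G : DirGraph) (l : Letter G.V) : G.Edge :=
  (show {e : G.Edge // G.src e = l.1 ∧ G.rng e = l.2.1} from l.2.2).val

lemma edgeArrow_inj (G : DirGraph) {e f : G.Edge} (h : G.edgeArrow e = G.edgeArrow f) :
    e = f := by
  have hw := (pathArrow_eq_iff h).2.2
  rw [edgeWord_toPath, edgeWord_toPath] at hw
  have hl := (List.cons.inj hw).1
  exact congrArg (fun l => letterEdge G l.1) hl

end LeavittAux
namespace LeavittAux
lemma edgeArrow_mem_WSet (G : DirGraph) (e : G.Edge) : G.edgeArrow e ∈ WSet G.V :=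
  ⟨_, _, _, rfl⟩
end LeavittAux
namespace LeavittAux
open CategoryTheory

section Alg

variable (K : Type) [Field K]

lemma lpa_vertex_idem (G : DirGraph) (v : G.V) :
    vertexGen K G v * vertexGen K G v = vertexGen K G v := by
  rw [vertexGen, ← map_mul]
  exact RingQuot.mkAlgHom_rel K (LeavittRel.vertex_idem v)

lemma lpa_vertex_orth (G : DirGraph) {v w : G.V} (hvw : v ≠ w) :
    vertexGen K G v * vertexGen K G w = 0 := by
  rw [vertexGen, vertexGen, ← map_mul]
  have := RingQuot.mkAlgHom_rel K (LeavittRel.vertex_orth (K := K) (G := G) v w hvw)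
  have h0 : (RingQuot.mkAlgHom K (LeavittRel K G)) 0 = 0 := map_zero _
  rwa [h0] at this

lemma lpa_src_edge (G : DirGraph) (e : G.Edge) :
    vertexGen K G (G.src e) * edgeGen K G e = edgeGen K G e := by
  rw [vertexGen, edgeGen, ← map_mul]
  exact RingQuot.mkAlgHom_rel K (LeavittRel.src_edge e)

lemma lpa_edge_rng (G : DirGraph) (e : G.Edge) :
    edgeGen K G e * vertexGen K G (G.rng e) = edgeGen K G e := by
  rw [vertexGen, edgeGen, ← map_mul]
  exact RingQuot.mkAlgHom_rel K (LeavittRel.edge_rng e)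

lemma lpa_rng_star (G : DirGraph) (e : G.Edge) :
    vertexGen K G (G.rng e) * starGen K G e = starGen K G e := by
  rw [vertexGen, starGen, ← map_mul]
  exact RingQuot.mkAlgHom_rel K (LeavittRel.rng_star e)

lemma lpa_star_src (G : DirGraph) (e : G.Edge) :
    starGen K G e * vertexGen K G (G.src e) = starGen K G e := by
  rw [vertexGen, starGen, ← map_mul]
  exact RingQuot.mkAlgHom_rel K (LeavittRel.star_src e)

lemma lpa_star_edge_same (G : DirGraph) (e : G.Edge) :
    starGen K G e * edgeGen K G e = vertexGen K G (G.rng e) := by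
  rw [vertexGen, starGen, edgeGen, ← map_mul]
  exact RingQuot.mkAlgHom_rel K (LeavittRel.star_edge_same e)

lemma lpa_star_edge_orth (G : DirGraph) {e f : G.Edge} (hef : e ≠ f) :
    starGen K G e * edgeGen K G f = 0 := by
  rw [starGen, edgeGen, ← map_mul]
  have := RingQuot.mkAlgHom_rel K (LeavittRel.star_edge_orth (K := K) (G := G) e f hef)
  have h0 : (RingQuot.mkAlgHom K (LeavittRel K G)) 0 = 0 := map_zero _
  rwa [h0] at this

lemma lpa_ck (G : DirGraph) (v : G.V) (hfin : {e : G.Edge | G.src e = v}.Finite)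
    (hne : {e : G.Edge | G.src e = v}.Nonempty) :
    vertexGen K G v = ∑ e ∈ hfin.toFinset, edgeGen K G e * starGen K G e := by
  rw [vertexGen]
  rw [RingQuot.mkAlgHom_rel K (LeavittRel.cuntz_krieger v hfin hne)]
  rw [map_sum]
  simp only [map_mul]
  rfl

variable (G₁ G₂ : DirGraph) (σ : G₁.V → G₂.V) (τ : G₁.Edge → G₂.Edge)

/-- The map on generators. -/
def genMap : G₁.V ⊕ G₁.Edge ⊕ G₁.Edge → LeavittPathAlgebra K G₂ :=
  Sum.elim (fun v => vertexGen K G₂ (σ v))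
    (Sum.elim (fun e => edgeGen K G₂ (τ e)) (fun e => starGen K G₂ (τ e)))

variable {σ τ}
variable (hσi : Function.Injective σ) (hτi : Function.Injective τ)
  (hτs : Function.Surjective τ)
  (hsrc : ∀ e, G₂.src (τ e) = σ (G₁.src e)) (hrng : ∀ e, G₂.rng (τ e) = σ (G₁.rng e))

include hσi hτi hτs hsrc hrng in
lemma rel_respect : ∀ ⦃a b⦄, LeavittRel K G₁ a b →
    (FreeAlgebra.lift K (genMap K G₁ G₂ σ τ)) a =
      (FreeAlgebra.lift K (genMap K G₁ G₂ σ τ)) b := by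
  intro a b hab
  induction hab with
  | vertex_idem v =>
    simp only [map_mul, FreeAlgebra.lift_ι_apply, genMap, Sum.elim_inl]
    exact lpa_vertex_idem K G₂ (σ v)
  | vertex_orth v w hvw =>
    simp only [map_mul, map_zero, FreeAlgebra.lift_ι_apply, genMap, Sum.elim_inl]
    exact lpa_vertex_orth K G₂ (fun hc => hvw (hσi hc))
  | src_edge e =>
    simp only [map_mul, FreeAlgebra.lift_ι_apply, genMap, Sum.elim_inl, Sum.elim_inr]
    rw [← hsrc e]
    exact lpa_src_edge K G₂ (τ e)
  | edge_rng e =>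
    simp only [map_mul, FreeAlgebra.lift_ι_apply, genMap, Sum.elim_inl, Sum.elim_inr]
    rw [← hrng e]
    exact lpa_edge_rng K G₂ (τ e)
  | rng_star e =>
    simp only [map_mul, FreeAlgebra.lift_ι_apply, genMap, Sum.elim_inl, Sum.elim_inr]
    rw [← hrng e]
    exact lpa_rng_star K G₂ (τ e)
  | star_src e =>
    simp only [map_mul, FreeAlgebra.lift_ι_apply, genMap, Sum.elim_inl, Sum.elim_inr]
    rw [← hsrc e]
    exact lpa_star_src K G₂ (τ e)
  | star_edge_same e =>
    simp only [map_mul, FreeAlgebra.lift_ι_apply, genMap, Sum.elim_inl, Sum.elim_inr]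
    rw [← hrng e]
    exact lpa_star_edge_same K G₂ (τ e)
  | star_edge_orth e f hef =>
    simp only [map_mul, map_zero, FreeAlgebra.lift_ι_apply, genMap, Sum.elim_inr]
    exact lpa_star_edge_orth K G₂ (fun hc => hef (hτi hc))
  | cuntz_krieger v hfin hne =>
    classical
    simp only [map_mul, map_sum, FreeAlgebra.lift_ι_apply, genMap, Sum.elim_inl, Sum.elim_inr]
    have hset : {f | G₂.src f = σ v} = τ '' {e | G₁.src e = v} := by
      ext f
      constructor
      · intro hf
        obtain ⟨e, rfl⟩ := hτs f
        exact ⟨e, hσi (((hsrc e).symm.trans hf)), rfl⟩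
      · rintro ⟨e, he, rfl⟩
        show G₂.src (τ e) = σ v
        rw [hsrc e, he]
    have hfin₂ : {f : G₂.Edge | G₂.src f = σ v}.Finite := by
      rw [hset]; exact hfin.image τ
    have hne₂ : {f : G₂.Edge | G₂.src f = σ v}.Nonempty := by
      rw [hset]; exact hne.image τ
    rw [lpa_ck K G₂ (σ v) hfin₂ hne₂]
    have htf : hfin₂.toFinset = hfin.toFinset.image τ := by
      ext f
      simp only [Set.Finite.mem_toFinset, Finset.mem_image, hset, Set.mem_image,
        Set.mem_setOf_eq]
    rw [htf, Finset.sum_image (fun x _ y _ hxy => hτi hxy)]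

/-- The algebra homomorphism induced by a map of graphs. -/
def lpaHom : LeavittPathAlgebra K G₁ →ₐ[K] LeavittPathAlgebra K G₂ :=
  RingQuot.liftAlgHom K ⟨FreeAlgebra.lift K (genMap K G₁ G₂ σ τ),
    rel_respect K G₁ G₂ hσi hτi hτs hsrc hrng⟩

lemma lpaHom_vertex (v : G₁.V) :
    lpaHom K G₁ G₂ hσi hτi hτs hsrc hrng (vertexGen K G₁ v) = vertexGen K G₂ (σ v) := by
  rw [vertexGen, lpaHom, RingQuot.liftAlgHom_mkAlgHom_apply, FreeAlgebra.lift_ι_apply]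
  rfl

lemma lpaHom_edge (e : G₁.Edge) :
    lpaHom K G₁ G₂ hσi hτi hτs hsrc hrng (edgeGen K G₁ e) = edgeGen K G₂ (τ e) := by
  rw [edgeGen, lpaHom, RingQuot.liftAlgHom_mkAlgHom_apply, FreeAlgebra.lift_ι_apply]
  rfl

lemma lpaHom_star (e : G₁.Edge) :
    lpaHom K G₁ G₂ hσi hτi hτs hsrc hrng (starGen K G₁ e) = starGen K G₂ (τ e) := by
  rw [starGen, lpaHom, RingQuot.liftAlgHom_mkAlgHom_apply, FreeAlgebra.lift_ι_apply]
  rfl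

lemma lpa_hom_ext {G : DirGraph} {B : Type} [Semiring B] [Algebra K B]
    {F F' : LeavittPathAlgebra K G →ₐ[K] B}
    (hv : ∀ v, F (vertexGen K G v) = F' (vertexGen K G v))
    (he : ∀ e, F (edgeGen K G e) = F' (edgeGen K G e))
    (hs : ∀ e, F (starGen K G e) = F' (starGen K G e)) : F = F' := by
  apply RingQuot.ringQuot_ext'
  apply FreeAlgebra.hom_ext
  funext x
  rcases x with v | e | e
  · simpa only [Function.comp_apply, AlgHom.coe_comp, vertexGen] using hv v
  · simpa only [Function.comp_apply, AlgHom.coe_comp, edgeGen] using he e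
  · simpa only [Function.comp_apply, AlgHom.coe_comp, starGen] using hs e

end Alg
end LeavittAux
/-- If there is a groupoid homomorphism `h` between the free path groupoids of `E₁` and `E₂`
which is injective on `W(E₁)` and maps `W(E₁)` onto `W(E₂)`, then there is a `K`-algebra
isomorphism `L_K(E₁) ≅ L_K(E₂)` preserving the generators: it sends a vertex `v` to the
vertex `h(v)` (the vertex with `h(𝟙_v) = 𝟙_{h(v)}`), and an edge `e` (resp. `e*`) to the
edge `f` (resp. `f*`) with `⟦f⟧ = h(⟦e⟧)`. -/
theorem leavitt_iso_of_groupoidHom (G₁ G₂ : DirGraph)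
    (h : Arr (Quiver.FreeGroupoid G₁.V) → Arr (Quiver.FreeGroupoid G₂.V)) (hhom : IsGroupoidHom h)
    (hinj : Set.InjOn h (WSet G₁.V)) (himg : h '' WSet G₁.V = WSet G₂.V) :
    ∃ φ : LeavittPathAlgebra K G₁ ≃ₐ[K] LeavittPathAlgebra K G₂,
      (∀ (v : G₁.V) (w : G₂.V),
        h (idArr ((Quiver.FreeGroupoid.of G₁.V).obj v)) = idArr ((Quiver.FreeGroupoid.of G₂.V).obj w) →
          φ (vertexGen K G₁ v) = vertexGen K G₂ w) ∧
      (∀ (e : G₁.Edge) (f : G₂.Edge),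
        h (G₁.edgeArrow e) = G₂.edgeArrow f →
          φ (edgeGen K G₁ e) = edgeGen K G₂ f ∧ φ (starGen K G₁ e) = starGen K G₂ f) := by
  classical
  -- the vertex map
  have hσex : ∀ v : G₁.V, ∃ w : G₂.V,
      h (idArr ((Quiver.FreeGroupoid.of G₁.V).obj v)) = idArr ((Quiver.FreeGroupoid.of G₂.V).obj w) :=
    fun v => ⟨LeavittAux.asV ((h (idArr ((Quiver.FreeGroupoid.of G₁.V).obj v))).1),
      LeavittAux.h_id h hhom _⟩
  choose σ hσ using hσex
  -- the edge map
  have hτex : ∀ e : G₁.Edge, ∃ f : G₂.Edge, h (G₁.edgeArrow e) = G₂.edgeArrow f := by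
    intro e
    obtain ⟨x', y', g, hg⟩ :=
      LeavittAux.h_edge h hhom hinj himg (show G₁.src e ⟶ G₁.rng e from ⟨e, rfl, rfl⟩)
    exact ⟨g.1, by
      rw [show G₁.edgeArrow e =
        pathArrow G₁.V (Quiver.Hom.toPath (show G₁.src e ⟶ G₁.rng e from ⟨e, rfl, rfl⟩))
        from rfl, hg, LeavittAux.pathArrow_toPath_eq_edgeArrow]⟩
  choose τ hτ using hτex
  -- bijectivity of the vertex map
  have hσi : Function.Injective σ := by
    intro v w hvw
    have h1 : h (idArr ((Quiver.FreeGroupoid.of G₁.V).obj v)) =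
        h (idArr ((Quiver.FreeGroupoid.of G₁.V).obj w)) := by
      rw [hσ v, hσ w, hvw]
    have h2 := hinj (LeavittAux.idArr_mem_WSet _) (LeavittAux.idArr_mem_WSet _) h1
    exact LeavittAux.of_obj_inj (LeavittAux.idArr_injective h2)
  have hσs : Function.Surjective σ := by
    intro w
    have hmem : idArr ((Quiver.FreeGroupoid.of G₂.V).obj w) ∈ WSet G₂.V :=
      LeavittAux.idArr_mem_WSet _
    rw [← himg] at hmem
    obtain ⟨a, haW, ha⟩ := hmem
    have haid : a = idArr a.2.1 := LeavittAux.h_pre_id h hhom hinj haW ha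
    refine ⟨LeavittAux.asV a.2.1, ?_⟩
    have h3 : h (idArr ((Quiver.FreeGroupoid.of G₁.V).obj (LeavittAux.asV a.2.1))) =
        idArr ((Quiver.FreeGroupoid.of G₂.V).obj w) := by
      rw [LeavittAux.obj_as, ← haid, ha]
    rw [hσ] at h3
    exact LeavittAux.of_obj_inj (LeavittAux.idArr_injective h3)
  -- bijectivity of the edge map
  have hτi : Function.Injective τ := by
    intro e e' hee
    have h1 : h (G₁.edgeArrow e) = h (G₁.edgeArrow e') := by rw [hτ e, hτ e', hee]
    have h2 := hinj (LeavittAux.edgeArrow_mem_WSet G₁ e) (LeavittAux.edgeArrow_mem_WSet G₁ e') h1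
    exact LeavittAux.edgeArrow_inj G₁ h2
  have hτs : Function.Surjective τ := by
    intro f
    have hf : G₂.edgeArrow f ∈ WSet G₂.V := LeavittAux.edgeArrow_mem_WSet G₂ f
    rw [← himg] at hf
    obtain ⟨a, haW, ha⟩ := hf
    obtain ⟨x, y, p, rfl⟩ := haW
    obtain ⟨x', y', g, hg⟩ := LeavittAux.h_edge_rev h hhom hinj himg p
      (show G₂.src f ⟶ G₂.rng f from ⟨f, rfl, rfl⟩) ha
    have h1 : h (G₁.edgeArrow g.1) = G₂.edgeArrow f := by
      rw [← LeavittAux.pathArrow_toPath_eq_edgeArrow G₁ g, ← hg]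
      exact ha
    exact ⟨g.1, LeavittAux.edgeArrow_inj G₂ ((hτ g.1).symm.trans h1)⟩
  -- compatibility with sources and ranges
  have hsrc : ∀ e, G₂.src (τ e) = σ (G₁.src e) := by
    intro e
    have h1 : h (idArr ((Quiver.FreeGroupoid.of G₁.V).obj (G₁.src e))) =
        idArr ((h (G₁.edgeArrow e)).1) := LeavittAux.h_source h hhom (G₁.edgeArrow e)
    rw [hσ (G₁.src e), hτ e] at h1
    have h2 : (Quiver.FreeGroupoid.of G₂.V).obj (σ (G₁.src e)) =
        (Quiver.FreeGroupoid.of G₂.V).obj (G₂.src (τ e)) := LeavittAux.idArr_injective h1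
    exact (LeavittAux.of_obj_inj h2).symm
  have hrng : ∀ e, G₂.rng (τ e) = σ (G₁.rng e) := by
    intro e
    have h1 : h (idArr ((Quiver.FreeGroupoid.of G₁.V).obj (G₁.rng e))) =
        idArr ((h (G₁.edgeArrow e)).2.1) := LeavittAux.h_target h hhom (G₁.edgeArrow e)
    rw [hσ (G₁.rng e), hτ e] at h1
    have h2 : (Quiver.FreeGroupoid.of G₂.V).obj (σ (G₁.rng e)) =
        (Quiver.FreeGroupoid.of G₂.V).obj (G₂.rng (τ e)) := LeavittAux.idArr_injective h1
    exact (LeavittAux.of_obj_inj h2).symm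
  -- inverse maps
  set σ' : G₂.V → G₁.V := Function.surjInv hσs with hσ'def
  set τ' : G₂.Edge → G₁.Edge := Function.surjInv hτs with hτ'def
  have hσ'r : ∀ w, σ (σ' w) = w := fun w => Function.surjInv_eq hσs w
  have hσ'l : ∀ v, σ' (σ v) = v := Function.leftInverse_surjInv ⟨hσi, hσs⟩
  have hτ'r : ∀ f, τ (τ' f) = f := fun f => Function.surjInv_eq hτs f
  have hτ'l : ∀ e, τ' (τ e) = e := Function.leftInverse_surjInv ⟨hτi, hτs⟩
  have hσ'i : Function.Injective σ' := fun a b hab => by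
    rw [← hσ'r a, ← hσ'r b, hab]
  have hτ'i : Function.Injective τ' := fun a b hab => by
    rw [← hτ'r a, ← hτ'r b, hab]
  have hτ's : Function.Surjective τ' := fun e => ⟨τ e, hτ'l e⟩
  have hsrc' : ∀ f, G₁.src (τ' f) = σ' (G₂.src f) := by
    intro f
    apply hσi
    rw [hσ'r, ← hsrc, hτ'r]
  have hrng' : ∀ f, G₁.rng (τ' f) = σ' (G₂.rng f) := by
    intro f
    apply hσi
    rw [hσ'r, ← hrng, hτ'r]
  -- the algebra homomorphisms
  set F := LeavittAux.lpaHom K G₁ G₂ hσi hτi hτs hsrc hrng with hF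
  set B := LeavittAux.lpaHom K G₂ G₁ hσ'i hτ'i hτ's hsrc' hrng' with hB
  have hFB : F.comp B = AlgHom.id K (LeavittPathAlgebra K G₂) := by
    apply LeavittAux.lpa_hom_ext K
    · intro v
      rw [AlgHom.coe_comp, Function.comp_apply, hB,
        LeavittAux.lpaHom_vertex, hF, LeavittAux.lpaHom_vertex, hσ'r, AlgHom.id_apply]
    · intro e
      rw [AlgHom.coe_comp, Function.comp_apply, hB,
        LeavittAux.lpaHom_edge, hF, LeavittAux.lpaHom_edge, hτ'r, AlgHom.id_apply]
    · intro e
      rw [AlgHom.coe_comp, Function.comp_apply, hB,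
        LeavittAux.lpaHom_star, hF, LeavittAux.lpaHom_star, hτ'r, AlgHom.id_apply]
  have hBF : B.comp F = AlgHom.id K (LeavittPathAlgebra K G₁) := by
    apply LeavittAux.lpa_hom_ext K
    · intro v
      rw [AlgHom.coe_comp, Function.comp_apply, hF,
        LeavittAux.lpaHom_vertex, hB, LeavittAux.lpaHom_vertex, hσ'l, AlgHom.id_apply]
    · intro e
      rw [AlgHom.coe_comp, Function.comp_apply, hF,
        LeavittAux.lpaHom_edge, hB, LeavittAux.lpaHom_edge, hτ'l, AlgHom.id_apply]
    · intro e
      rw [AlgHom.coe_comp, Function.comp_apply, hF,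
        LeavittAux.lpaHom_star, hB, LeavittAux.lpaHom_star, hτ'l, AlgHom.id_apply]
  refine ⟨AlgEquiv.ofAlgHom F B hFB hBF, ?_, ?_⟩
  · intro v w hvw
    have hw : σ v = w :=
      LeavittAux.of_obj_inj (LeavittAux.idArr_injective ((hσ v).symm.trans hvw))
    show F (vertexGen K G₁ v) = vertexGen K G₂ w
    rw [hF, LeavittAux.lpaHom_vertex, hw]
  · intro e f hef
    have hfeq : τ e = f := LeavittAux.edgeArrow_inj G₂ ((hτ e).symm.trans hef)
    constructor
    · show F (edgeGen K G₁ e) = edgeGen K G₂ f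
      rw [hF, LeavittAux.lpaHom_edge, hfeq]
    · show F (starGen K G₁ e) = starGen K G₂ f
      rw [hF, LeavittAux.lpaHom_star, hfeq]
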